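/- Let a be a real number, F : ℝ → ℝ a function, and G : (0,∞) → ℝ a differentiable function with G'(y) = 2·F(y)·y^(−1−2a) for all y > 0 (real power). If φ : ℝ → ℝ is twice differentiable with φ(η) > 0 for all η and satisfies φ·φ'' − a(φ')² = F(φ), then the quantity (φ'(η))²·φ(η)^(−2a) − G(φ(η)) is constant in η. -/

import Mathlib

/-- first integral of the general equation `φφ'' − a(φ')² = F(φ)`. -/
theorem stmt_12 (a : ℝ) (F : ℝ → ℝ) (G : ℝ → ℝ)
    (hG : ∀ y : ℝ, 0 < y → HasDerivAt G (2 * F y * y ^ (-1 - 2 * a)) y)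
    (φ : ℝ → ℝ) (hφ : Differentiable ℝ φ) (hφ' : Differentiable ℝ (deriv φ))
    (hpos : ∀ η : ℝ, 0 < φ η)
    (hode : ∀ η : ℝ, φ η * deriv (deriv φ) η - a * (deriv φ η) ^ 2 = F (φ η)) :
    ∀ η₁ η₂ : ℝ,
      (deriv φ η₁) ^ 2 * (φ η₁) ^ (-(2 * a)) - G (φ η₁)
        = (deriv φ η₂) ^ 2 * (φ η₂) ^ (-(2 * a)) - G (φ η₂) := by
  have key : ∀ η : ℝ, HasDerivAt
      (fun η => (deriv φ η) ^ 2 * (φ η) ^ (-(2 * a)) - G (φ η)) 0 η := by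
    intro η
    have hp0 : φ η ≠ 0 := (hpos η).ne'
    have h1 : HasDerivAt φ (deriv φ η) η := (hφ η).hasDerivAt
    have h2 : HasDerivAt (deriv φ) (deriv (deriv φ) η) η := (hφ' η).hasDerivAt
    have h3 := h2.pow 2
    have h4 := h1.rpow_const (p := -(2 * a)) (Or.inl hp0)
    have h5 := (hG (φ η) (hpos η)).comp η h1
    have h6 := (h3.mul h4).sub h5
    convert h6 using 1
    all_goals try rfl
    have hode' := hode η
    have hq : (φ η) ^ (-(2 * a)) = (φ η) ^ (-(2 * a) - 1) * φ η := by
      rw [← Real.rpow_add_one hp0]; ring_nf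
    have hq2 : (φ η) ^ (-1 - 2 * a) = (φ η) ^ (-(2 * a) - 1) := by
      rw [show (-1 - 2 * a) = -(2 * a) - 1 by ring]
    rw [hq, hq2, ← hode']
    simp only [Pi.pow_apply]
    ring
  intro η₁ η₂
  exact is_const_of_deriv_eq_zero (fun η => (key η).differentiableAt)
    (fun η => (key η).deriv) η₁ η₂
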